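/- Let g be a perfect Lie algebra with zero center. If the center of the outer derivation algebra Der(g)/ad(g) is zero, then the holomorph h(g) = g ⋊ Der(g) is complete. -/

import Mathlib

section HolomorphDef

variable (K : Type*) (L : Type*) [Field K] [LieRing L] [LieAlgebra K L]

/-- The bracket `[(x,d),(y,e)] = ([x,y] + d(y) - e(x), [d,e])` on `g ⊕ Der(g)`. -/
def holoBracket (h h' : L × LieDerivation K L L) : L × LieDerivation K L L :=
  (⁅h.1, h'.1⁆ + h.2 h'.1 - h'.2 h.1, ⁅h.2, h'.2⁆)

variable {K L}

lemma holoBracket_add_left (x y z : L × LieDerivation K L L) :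
    holoBracket K L (x + y) z = holoBracket K L x z + holoBracket K L y z := by
  simp only [holoBracket, Prod.ext_iff, Prod.fst_add, Prod.snd_add, add_lie,
    LieDerivation.coe_add, Pi.add_apply, map_add]
  constructor
  · abel
  · simp [add_lie]

lemma holoBracket_add_right (x y z : L × LieDerivation K L L) :
    holoBracket K L x (y + z) = holoBracket K L x y + holoBracket K L x z := by
  simp only [holoBracket, Prod.ext_iff, Prod.fst_add, Prod.snd_add, lie_add,
    LieDerivation.coe_add, Pi.add_apply, map_add]
  constructor
  · abel
  · simp [lie_add]

lemma holoBracket_self (x : L × LieDerivation K L L) : holoBracket K L x x = 0 := by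
  simp [holoBracket, Prod.ext_iff]

lemma holoBracket_leibniz (x y z : L × LieDerivation K L L) :
    holoBracket K L x (holoBracket K L y z) =
      holoBracket K L (holoBracket K L x y) z + holoBracket K L y (holoBracket K L x z) := by
  simp only [holoBracket, Prod.ext_iff, Prod.fst_add, Prod.snd_add,
    LieDerivation.commutator_apply, map_add, map_sub, lie_add, lie_sub, add_lie, sub_lie,
    LieDerivation.apply_lie_eq_add]
  constructor
  · rw [leibniz_lie x.1 y.1 z.1, ← lie_skew (z.2 x.1) y.1]
    abel
  · rw [leibniz_lie]

lemma holoBracket_smul (t : K) (x y : L × LieDerivation K L L) :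
    holoBracket K L x (t • y) = t • holoBracket K L x y := by
  refine Prod.ext ?_ ?_
  · simp [holoBracket, smul_add, smul_sub]
  · exact lie_smul t x.2 y.2

variable (K L)

/-- The holomorph `h(g) = g ⋊ Der(g)` of a Lie algebra `g`: as a vector space it is
the direct sum `g ⊕ Der(g)`. -/
def Holomorph := L × LieDerivation K L L

namespace Holomorph

instance : AddCommGroup (Holomorph K L) :=
  inferInstanceAs (AddCommGroup (L × LieDerivation K L L))

instance : Module K (Holomorph K L) :=
  inferInstanceAs (Module K (L × LieDerivation K L L))

instance : LieRing (Holomorph K L) where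
  bracket h h' := holoBracket K L h h'
  add_lie := holoBracket_add_left
  lie_add := holoBracket_add_right
  lie_self := holoBracket_self
  leibniz_lie := holoBracket_leibniz

instance : LieAlgebra K (Holomorph K L) where
  lie_smul := holoBracket_smul

variable {K L}

/-- The element `(x, d)` (also written `x + d`) of the holomorph. -/
def mk (x : L) (d : LieDerivation K L L) : Holomorph K L := (x, d)

/-- The `g`-component of an element of the holomorph. -/
def fst (h : Holomorph K L) : L := (show L × LieDerivation K L L from h).1

/-- The `Der(g)`-component of an element of the holomorph. -/
def snd (h : Holomorph K L) : LieDerivation K L L := (show L × LieDerivation K L L from h).2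

@[simp] lemma fst_mk (x : L) (d : LieDerivation K L L) : (mk x d).fst = x := rfl
@[simp] lemma snd_mk (x : L) (d : LieDerivation K L L) : (mk x d).snd = d := rfl

lemma ext {h h' : Holomorph K L} (h1 : h.fst = h'.fst) (h2 : h.snd = h'.snd) : h = h' :=
  Prod.ext h1 h2

/-- The bracket of the holomorph is `[(x,d),(y,e)] = ([x,y] + d(y) - e(x), [d,e])`. -/
lemma bracket_def (x y : L) (d e : LieDerivation K L L) :
    ⁅mk x d, mk y e⁆ = mk (⁅x, y⁆ + d y - e x) ⁅d, e⁆ := rfl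

end Holomorph

end HolomorphDef


section Aux

variable {K L : Type*} [Field K] [LieRing L] [LieAlgebra K L]

namespace Holomorph

lemma fst_bracket (h h' : Holomorph K L) :
    (⁅h, h'⁆).fst = ⁅h.fst, h'.fst⁆ + h.snd h'.fst - h'.snd h.fst := rfl

lemma snd_bracket (h h' : Holomorph K L) : (⁅h, h'⁆).snd = ⁅h.snd, h'.snd⁆ := rfl

lemma fst_add (h h' : Holomorph K L) : (h + h').fst = h.fst + h'.fst := rfl

lemma snd_add (h h' : Holomorph K L) : (h + h').snd = h.snd + h'.snd := rfl

lemma fst_zero : (0 : Holomorph K L).fst = 0 := rfl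

lemma snd_zero : (0 : Holomorph K L).snd = 0 := rfl

lemma mk_add_mk (x y : L) (d e : LieDerivation K L L) :
    mk x d + mk y e = mk (x + y) (d + e) := rfl

lemma mk_zero_zero : (mk 0 0 : Holomorph K L) = 0 := rfl

lemma smul_mk (t : K) (x : L) (d : LieDerivation K L L) :
    t • mk x d = mk (t • x) (t • d) := rfl

lemma eq_mk (h : Holomorph K L) : h = mk h.fst h.snd := rfl

lemma mk_split (x : L) (d : LieDerivation K L L) : mk x d = mk x 0 + mk 0 d := by
  rw [mk_add_mk, add_zero, zero_add]

end Holomorph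

lemma center_mem_eq_zero (hc : LieAlgebra.center K L = ⊥) {x : L}
    (h : ∀ y : L, ⁅y, x⁆ = 0) : x = 0 := by
  have : x ∈ LieAlgebra.center K L := (LieModule.mem_maxTrivSubmodule K L L x).mpr h
  rwa [hc, LieSubmodule.mem_bot] at this

end Aux

/-- A Lie algebra is complete if its center is zero and every derivation is inner. -/
def IsCompleteLieAlgebra (K : Type*) (M : Type*) [Field K] [LieRing M] [LieAlgebra K M] : Prop :=
  LieAlgebra.center K M = ⊥ ∧
    ∀ D : LieDerivation K M M, ∃ m : M, D = LieDerivation.ad K M m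

/-- Let `g` be perfect with zero center. If the outer derivation algebra
`Der(g)/ad(g)` has zero center, then the holomorph `h(g)` is complete. -/
theorem holomorph_isComplete_of_center_outer_eq_bot (K : Type*) (L : Type*) [Field K]
    [LieRing L] [LieAlgebra K L] (hperf : ⁅(⊤ : LieIdeal K L), (⊤ : LieIdeal K L)⁆ = ⊤)
    (hc : LieAlgebra.center K L = ⊥)
    (houter : LieAlgebra.center K
      (LieDerivation K L L ⧸ (LieDerivation.ad K L).idealRange) = ⊥) :
    IsCompleteLieAlgebra K (Holomorph K L) := by
  refine ⟨(LieSubmodule.eq_bot_iff _).mpr fun z hz => ?_, fun D => ?_⟩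
  · -- center of the holomorph is trivial
    have hz' : ∀ w : Holomorph K L, ⁅w, z⁆ = 0 :=
      (LieModule.mem_maxTrivSubmodule K _ _ z).mp hz
    have hx : z.fst = 0 := by
      apply center_mem_eq_zero hc
      intro y
      have h := congrArg Holomorph.fst (hz' (Holomorph.mk 0 (LieDerivation.ad K L y)))
      rw [Holomorph.eq_mk z] at h
      rw [Holomorph.bracket_def] at h
      simpa [LieDerivation.ad_apply_apply, Holomorph.fst_zero] using h
    have hd : z.snd = 0 := by
      ext y
      have h := congrArg Holomorph.fst (hz' (Holomorph.mk y 0))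
      rw [Holomorph.eq_mk z] at h
      rw [Holomorph.bracket_def] at h
      simp only [Holomorph.fst_mk, hx, lie_zero, LieDerivation.coe_zero, Pi.zero_apply,
        zero_add, zero_sub, neg_eq_zero, Holomorph.fst_zero] at h
      simpa using h
    rw [Holomorph.eq_mk z, hx, hd]
    rfl
  · -- every derivation is inner
    have hmkL_add : ∀ x y : L,
        Holomorph.mk (K := K) (x + y) 0 = Holomorph.mk x 0 + Holomorph.mk y 0 := by
      intro x y; rw [Holomorph.mk_add_mk, add_zero]
    have hmkL_smul : ∀ (t : K) (x : L),
        Holomorph.mk (K := K) (t • x) 0 = t • Holomorph.mk x 0 := by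
      intro t x; rw [Holomorph.smul_mk, smul_zero]
    have hmkD_add : ∀ d e : LieDerivation K L L,
        Holomorph.mk (0 : L) (d + e) = Holomorph.mk 0 d + Holomorph.mk 0 e := by
      intro d e; rw [Holomorph.mk_add_mk, add_zero]
    have hmkD_smul : ∀ (t : K) (d : LieDerivation K L L),
        Holomorph.mk (0 : L) (t • d) = t • Holomorph.mk 0 d := by
      intro t d; rw [Holomorph.smul_mk, smul_zero]
    -- the bracket of two elements of `g`
    have hbr1 : ∀ x y : L,
        (⁅Holomorph.mk (K := K) x 0, Holomorph.mk y 0⁆ : Holomorph K L)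
          = Holomorph.mk ⁅x, y⁆ 0 := by
      intro x y
      rw [Holomorph.bracket_def]
      exact Holomorph.ext (by simp) (by simp)
    -- the `Der`-component of `D` vanishes on brackets of `g`
    have hδbr : ∀ x y : L,
        (D (Holomorph.mk ⁅x, y⁆ (0 : LieDerivation K L L))).snd = 0 := by
      intro x y
      have h1 := D.apply_lie_eq_add (Holomorph.mk x 0) (Holomorph.mk y 0)
      rw [hbr1 x y] at h1
      have h2 := congrArg Holomorph.snd h1
      simpa [Holomorph.snd_add, Holomorph.snd_bracket, Holomorph.snd_mk] using h2
    -- hence, by perfectness, it vanishes on all of `g`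
    have hδ : ∀ x : L, (D (Holomorph.mk x (0 : LieDerivation K L L))).snd = 0 := by
      intro x
      have hx : x ∈ (⁅(⊤ : LieIdeal K L), (⊤ : LieIdeal K L)⁆ : LieIdeal K L) := by
        rw [hperf]; exact LieSubmodule.mem_top x
      have hx' : x ∈ Submodule.span K
          { m : L | ∃ a ∈ (⊤ : LieIdeal K L), ∃ b ∈ (⊤ : LieIdeal K L), ⁅a, b⁆ = m } := by
        rw [← LieSubmodule.lieIdeal_oper_eq_linear_span']; exact hx
      refine Submodule.span_induction ?_ ?_ ?_ ?_ hx'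
      · rintro m ⟨a, -, b, -, rfl⟩; exact hδbr a b
      · rw [Holomorph.mk_zero_zero, map_zero]; rfl
      · intro a b _ _ ha hb
        rw [hmkL_add, map_add, Holomorph.snd_add, ha, hb, add_zero]
      · intro t a _ ha
        rw [hmkL_smul, map_smul]
        show t • (D (Holomorph.mk a 0)).snd = 0
        rw [ha, smul_zero]
    -- the `g`-component of `D` restricted to `g` is a derivation of `g`
    have hfbr : ∀ x y : L,
        (D (Holomorph.mk ⁅x, y⁆ (0 : LieDerivation K L L))).fst
          = ⁅x, (D (Holomorph.mk y (0 : LieDerivation K L L))).fst⁆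
            + ⁅(D (Holomorph.mk x (0 : LieDerivation K L L))).fst, y⁆ := by
      intro x y
      have h1 := D.apply_lie_eq_add (Holomorph.mk x 0) (Holomorph.mk y 0)
      rw [hbr1 x y] at h1
      have h2 := congrArg Holomorph.fst h1
      simpa [Holomorph.fst_add, Holomorph.fst_bracket, Holomorph.fst_mk, Holomorph.snd_mk,
        hδ] using h2
    let F : LieDerivation K L L :=
      { toFun := fun x => (D (Holomorph.mk x (0 : LieDerivation K L L))).fst
        map_add' := fun a b => by
          show (D (Holomorph.mk (a + b) (0 : LieDerivation K L L))).fst = _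
          rw [hmkL_add, map_add]; rfl
        map_smul' := fun t a => by
          show (D (Holomorph.mk (t • a) (0 : LieDerivation K L L))).fst = _
          rw [hmkL_smul, map_smul]; rfl
        leibniz' := fun a b => by
          show (D (Holomorph.mk ⁅a, b⁆ (0 : LieDerivation K L L))).fst = _
          rw [hfbr a b, sub_eq_add_neg, lie_skew]; rfl }
    have hF : ∀ x : L, F x = (D (Holomorph.mk x (0 : LieDerivation K L L))).fst :=
      fun _ => rfl
    -- the bracket of a derivation against an element of `g`
    have hbr2 : ∀ (d : LieDerivation K L L) (y : L),
        (⁅Holomorph.mk (0 : L) d, Holomorph.mk y 0⁆ : Holomorph K L)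
          = Holomorph.mk (d y) 0 := by
      intro d y
      rw [Holomorph.bracket_def]
      exact Holomorph.ext (by simp) (by simp)
    have h2 : ∀ (d : LieDerivation K L L) (y : L),
        F (d y) = ⁅(D (Holomorph.mk (0 : L) d)).fst, y⁆
          + (D (Holomorph.mk (0 : L) d)).snd y + d (F y) := by
      intro d y
      have h1 := D.apply_lie_eq_add (Holomorph.mk (0 : L) d) (Holomorph.mk y 0)
      rw [hbr2 d y] at h1
      have h2 := congrArg Holomorph.fst h1
      simp only [Holomorph.fst_add, Holomorph.fst_bracket, Holomorph.fst_mk, Holomorph.snd_mk,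
        hδ, LieDerivation.coe_zero, Pi.zero_apply, zero_lie, sub_zero, zero_add] at h2
      rw [hF (d y), hF y, h2]
      abel
    -- the bracket of two pure derivations
    have hbr3 : ∀ d e : LieDerivation K L L,
        (⁅Holomorph.mk (0 : L) d, Holomorph.mk (0 : L) e⁆ : Holomorph K L)
          = Holomorph.mk 0 ⁅d, e⁆ := by
      intro d e
      rw [Holomorph.bracket_def]
      exact Holomorph.ext (by simp) (by simp)
    have hα : ∀ d e : LieDerivation K L L,
        (D (Holomorph.mk (0 : L) ⁅d, e⁆)).fst
          = d ((D (Holomorph.mk (0 : L) e)).fst) - e ((D (Holomorph.mk (0 : L) d)).fst) := by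
      intro d e
      have h1 := D.apply_lie_eq_add (Holomorph.mk (0 : L) d) (Holomorph.mk (0 : L) e)
      rw [hbr3 d e] at h1
      have h2 := congrArg Holomorph.fst h1
      simp only [Holomorph.fst_add, Holomorph.fst_bracket, Holomorph.fst_mk, Holomorph.snd_mk,
        map_zero, lie_zero, zero_lie, zero_add, add_zero, zero_sub, sub_zero] at h2
      rw [h2]
      abel
    -- the map `y ↦ A (ad y)` is a derivation of `g`
    let T : LieDerivation K L L :=
      { toFun := fun y => (D (Holomorph.mk (0 : L) (LieDerivation.ad K L y))).fst
        map_add' := fun a b => by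
          show (D (Holomorph.mk (0 : L) (LieDerivation.ad K L (a + b)))).fst = _
          rw [map_add (LieDerivation.ad K L), hmkD_add, map_add]; rfl
        map_smul' := fun t a => by
          show (D (Holomorph.mk (0 : L) (LieDerivation.ad K L (t • a)))).fst = _
          rw [map_smul (LieDerivation.ad K L), hmkD_smul, map_smul]; rfl
        leibniz' := fun a b => by
          show (D (Holomorph.mk (0 : L) (LieDerivation.ad K L ⁅a, b⁆))).fst = _
          rw [LieHom.map_lie, hα]
          simp [LieDerivation.ad_apply_apply] }
    have hTapp : ∀ y : L,
        T y = (D (Holomorph.mk (0 : L) (LieDerivation.ad K L y))).fst := fun _ => rfl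
    -- the commutator of `T` with any derivation is inner
    have hT : ∀ d : LieDerivation K L L,
        ⁅T, d⁆ = LieDerivation.ad K L ((D (Holomorph.mk (0 : L) d)).fst) := by
      intro d
      ext y
      rw [LieDerivation.commutator_apply]
      have e1 : (⁅d, LieDerivation.ad K L y⁆ : LieDerivation K L L)
          = LieDerivation.ad K L (d y) := LieDerivation.lie_der_ad_eq_ad_der d y
      have h5 := hα d (LieDerivation.ad K L y)
      rw [e1] at h5
      rw [hTapp (d y), hTapp y, h5]
      simp only [LieDerivation.ad_apply_apply]
      rw [sub_sub_cancel_left]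
      exact lie_skew _ _
    -- the class of `T` is central in the outer derivation algebra, so `T` is inner
    have hTmem : T ∈ (LieDerivation.ad K L).idealRange := by
      have hcentral : LieSubmodule.Quotient.mk' (LieDerivation.ad K L).idealRange T ∈
          LieAlgebra.center K (LieDerivation K L L ⧸ (LieDerivation.ad K L).idealRange) := by
        refine (LieModule.mem_maxTrivSubmodule K _ _ _).mpr fun m => ?_
        obtain ⟨d, rfl⟩ := LieSubmodule.Quotient.surjective_mk'
          (N := (LieDerivation.ad K L).idealRange) m
        have hb : (⁅LieSubmodule.Quotient.mk' (LieDerivation.ad K L).idealRange d,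
            LieSubmodule.Quotient.mk' (LieDerivation.ad K L).idealRange T⁆ :
            LieDerivation K L L ⧸ (LieDerivation.ad K L).idealRange)
            = LieSubmodule.Quotient.mk' (LieDerivation.ad K L).idealRange ⁅d, T⁆ := rfl
        rw [hb, LieSubmodule.Quotient.mk_eq_zero]
        have : (⁅d, T⁆ : LieDerivation K L L)
            = LieDerivation.ad K L (-((D (Holomorph.mk (0 : L) d)).fst)) := by
          rw [← lie_skew, hT d, map_neg (LieDerivation.ad K L)]
        rw [this]
        exact LieDerivation.mem_ad_idealRange_iff.mpr ⟨_, rfl⟩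
      rw [houter, LieSubmodule.mem_bot] at hcentral
      exact (LieSubmodule.Quotient.mk_eq_zero _).mp hcentral
    obtain ⟨x0, hx0⟩ := LieDerivation.mem_ad_idealRange_iff.mp hTmem
    -- consequently the cocycle `A` is a coboundary
    have hαd : ∀ d : LieDerivation K L L,
        (D (Holomorph.mk (0 : L) d)).fst = -(d x0) := by
      intro d
      apply LieDerivation.injective_ad_of_center_eq_bot hc
      rw [← hT d, map_neg (LieDerivation.ad K L), ← LieDerivation.lie_der_ad_eq_ad_der, hx0, lie_skew]
    -- the inner element realizing `D`
    refine ⟨Holomorph.mk x0 (F - LieDerivation.ad K L x0), ?_⟩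
    ext z
    have hadz : LieDerivation.ad K (Holomorph K L)
        (Holomorph.mk x0 (F - LieDerivation.ad K L x0)) z
          = ⁅Holomorph.mk x0 (F - LieDerivation.ad K L x0), z⁆ := by simp
    rw [hadz]
    have hzdec : z = Holomorph.mk z.fst (0 : LieDerivation K L L)
        + Holomorph.mk (0 : L) z.snd := by
      rw [Holomorph.mk_add_mk, add_zero, zero_add]; rfl
    rw [hzdec, map_add, lie_add]
    have key1 : D (Holomorph.mk z.fst (0 : LieDerivation K L L))
        = ⁅Holomorph.mk x0 (F - LieDerivation.ad K L x0),
            Holomorph.mk z.fst (0 : LieDerivation K L L)⁆ := by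
      rw [Holomorph.bracket_def]
      refine Holomorph.ext ?_ ?_
      · rw [Holomorph.fst_mk, ← hF z.fst]
        simp only [LieDerivation.coe_sub, Pi.sub_apply, LieDerivation.coe_zero, Pi.zero_apply,
          LieDerivation.ad_apply_apply, sub_zero]
        abel
      · rw [Holomorph.snd_mk, hδ z.fst, lie_zero]
    have key2 : D (Holomorph.mk (0 : L) z.snd)
        = ⁅Holomorph.mk x0 (F - LieDerivation.ad K L x0),
            Holomorph.mk (0 : L) z.snd⁆ := by
      rw [Holomorph.bracket_def]
      refine Holomorph.ext ?_ ?_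
      · rw [Holomorph.fst_mk, hαd z.snd]
        simp
      · rw [Holomorph.snd_mk]
        ext y
        rw [LieDerivation.commutator_apply]
        have h6 := h2 z.snd y
        rw [hαd z.snd] at h6
        have h7 : (D (Holomorph.mk (0 : L) z.snd)).snd y
            = F (z.snd y) - z.snd (F y) + ⁅z.snd x0, y⁆ := by
          rw [h6, neg_lie]
          abel
        rw [h7]
        simp only [LieDerivation.coe_sub, Pi.sub_apply,
          LieDerivation.ad_apply_apply, map_sub]
        rw [LieDerivation.apply_lie_eq_add]
        abel
    rw [key1, key2]
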